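/- For all integers n ≥ 1, ⌊⌊nφ⌋·φ⌋ = ⌊nφ⌋ + n − 1 and ⌊⌊nφ²⌋·φ⌋ = 2⌊nφ⌋ + n. -/

import Mathlib

noncomputable def phi : ℝ := (1 + Real.sqrt 5) / 2

/-- For all `n ≥ 1`: `⌊⌊nφ⌋·φ⌋ = ⌊nφ⌋ + n − 1` and `⌊⌊nφ²⌋·φ⌋ = 2⌊nφ⌋ + n`. -/
theorem floor_wythoff_compositions (n : ℕ) (hn : 1 ≤ n) :
    ⌊((⌊(n : ℝ) * phi⌋ : ℤ) : ℝ) * phi⌋ = ⌊(n : ℝ) * phi⌋ + (n : ℤ) - 1 ∧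
    ⌊((⌊(n : ℝ) * phi ^ 2⌋ : ℤ) : ℝ) * phi⌋ = 2 * ⌊(n : ℝ) * phi⌋ + (n : ℤ) := by
  have hsq : Real.sqrt 5 ^ 2 = 5 := Real.sq_sqrt (by norm_num)
  have hs0 : (0:ℝ) ≤ Real.sqrt 5 := Real.sqrt_nonneg 5
  have hs2 : 2 < Real.sqrt 5 := by nlinarith
  have hs3 : Real.sqrt 5 < 3 := by nlinarith
  have hphi1 : 1 < phi := by unfold phi; linarith
  have hphi2 : phi < 2 := by unfold phi; linarith
  have hphisq : phi ^ 2 = phi + 1 := by unfold phi; nlinarith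
  have hirr5 : Irrational (Real.sqrt 5) := (by norm_num : Nat.Prime 5).irrational_sqrt
  have hirr : Irrational phi := by
    have h1 : Irrational (1 + Real.sqrt 5) := by simpa using hirr5.ratCast_add (q := 1)
    simpa [phi] using h1.div_natCast (by norm_num : (2:ℕ) ≠ 0)
  have hnirr : Irrational ((n : ℝ) * phi) := hirr.natCast_mul (by omega)
  set a : ℤ := ⌊(n : ℝ) * phi⌋ with ha
  set θ : ℝ := Int.fract ((n : ℝ) * phi) with hθ
  have hθ0 : 0 < θ := by
    rw [hθ, Int.fract_pos]
    exact hnirr.ne_int a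
  have hθ1 : θ < 1 := Int.fract_lt_one _
  have hca : (a : ℝ) = (n : ℝ) * phi - θ := by
    rw [hθ, Int.fract]; ring
  constructor
  · rw [Int.floor_eq_iff]
    constructor
    · push_cast
      rw [hca]
      nlinarith
    · push_cast
      rw [hca]
      nlinarith
  · have hb : ⌊(n : ℝ) * phi ^ 2⌋ = a + n := by
      have : (n : ℝ) * phi ^ 2 = (n : ℝ) * phi + (n : ℤ) := by
        rw [hphisq]; push_cast; ring
      rw [this, Int.floor_add_intCast]
    rw [hb, Int.floor_eq_iff]
    constructor
    · push_cast
      rw [hca]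
      nlinarith
    · push_cast
      rw [hca]
      nlinarith
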